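/- Let F : ℝ → (n×n Hermitian matrices) be continuous. Then there exist n continuous real-valued functions λ₁(t), ..., λₙ(t) such that for every t, (λ₁(t), ..., λₙ(t)) are the eigenvalues of F(t) counted with multiplicity. -/

import Mathlib

open Polynomial Matrix
open scoped ComplexOrder

namespace Stmt19Aux

variable {n : ℕ}

local notation "⟪" x ", " y "⟫" => @inner ℂ (EuclideanSpace ℂ (Fin n)) _ x y

open scoped ComplexConjugate

/-- quadratic form of a matrix -/
noncomputable def qf (A : Matrix (Fin n) (Fin n) ℂ) (x : EuclideanSpace ℂ (Fin n)) : ℝ :=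
  (⟪x, Matrix.toEuclideanLin A x⟫).re

lemma toEuclideanLin_eigBasis {A : Matrix (Fin n) (Fin n) ℂ} (hA : A.IsHermitian) (j : Fin n) :
    Matrix.toEuclideanLin A (hA.eigenvectorBasis j) =
      ((hA.eigenvalues j : ℂ)) • hA.eigenvectorBasis j := by
  have h := hA.mulVec_eigenvectorBasis j
  apply (WithLp.equiv 2 (Fin n → ℂ)).injective
  ext i
  have := congrFun h i
  simpa [Matrix.toEuclideanLin_apply, Complex.real_smul] using this

lemma qf_eq_sum {A : Matrix (Fin n) (Fin n) ℂ} (hA : A.IsHermitian)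
    (x : EuclideanSpace ℂ (Fin n)) :
    qf A x = ∑ j, hA.eigenvalues j * ‖hA.eigenvectorBasis.repr x j‖ ^ 2 := by
  set b := hA.eigenvectorBasis with hb
  have hx : ∑ j, b.repr x j • b j = x := b.sum_repr x
  have hTx : Matrix.toEuclideanLin A x
      = ∑ j, ((hA.eigenvalues j : ℂ) * b.repr x j) • b j := by
    conv_lhs => rw [← hx]
    rw [map_sum]
    refine Finset.sum_congr rfl fun j _ => ?_
    rw [LinearMap.map_smul, toEuclideanLin_eigBasis hA j, smul_smul, mul_comm]
  have hinner : ⟪x, Matrix.toEuclideanLin A x⟫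
      = ∑ j, conj (b.repr x j) * ((hA.eigenvalues j : ℂ) * b.repr x j) := by
    rw [hTx]
    nth_rewrite 1 [← hx]
    exact b.orthonormal.inner_sum _ _ _
  rw [qf, hinner, Complex.re_sum]
  refine Finset.sum_congr rfl fun j _ => ?_
  have h5 : b.repr x j * conj (b.repr x j) = ((‖b.repr x j‖ ^ 2 : ℝ) : ℂ) := by
    rw [Complex.mul_conj]
    norm_cast
    rw [← Complex.sq_norm]
  have h3 : conj (b.repr x j) * ((hA.eigenvalues j : ℂ) * b.repr x j)
      = ((hA.eigenvalues j * ‖b.repr x j‖ ^ 2 : ℝ) : ℂ) := by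
    calc conj (b.repr x j) * ((hA.eigenvalues j : ℂ) * b.repr x j)
        = (hA.eigenvalues j : ℂ) * (b.repr x j * conj (b.repr x j)) := by ring
      _ = _ := by rw [h5]; push_cast; ring
  rw [h3, Complex.ofReal_re]

lemma norm_sq_eq_sum_repr {A : Matrix (Fin n) (Fin n) ℂ} (hA : A.IsHermitian)
    (x : EuclideanSpace ℂ (Fin n)) :
    ‖x‖ ^ 2 = ∑ j, ‖hA.eigenvectorBasis.repr x j‖ ^ 2 := by
  rw [← hA.eigenvectorBasis.repr.norm_map x]
  rw [EuclideanSpace.norm_eq]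
  rw [Real.sq_sqrt]
  positivity

lemma repr_eq_zero_of_mem_span {A : Matrix (Fin n) (Fin n) ℂ} (hA : A.IsHermitian)
    (S : Finset (Fin n)) {x : EuclideanSpace ℂ (Fin n)}
    (hx : x ∈ Submodule.span ℂ (⇑hA.eigenvectorBasis '' ↑S)) {j : Fin n} (hj : j ∉ S) :
    hA.eigenvectorBasis.repr x j = 0 := by
  set b := hA.eigenvectorBasis with hb
  rw [b.repr_apply_apply]
  have hle : Submodule.span ℂ (⇑b '' ↑S) ≤ LinearMap.ker ((innerSL ℂ (b j)).toLinearMap) := by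
    rw [Submodule.span_le]
    rintro v ⟨i, hi, rfl⟩
    simp only [SetLike.mem_coe, LinearMap.mem_ker, ContinuousLinearMap.coe_coe, innerSL_apply_apply]
    exact b.orthonormal.2 (fun h => hj (h ▸ hi))
  simpa using hle hx

lemma qf_ge {A : Matrix (Fin n) (Fin n) ℂ} (hA : A.IsHermitian)
    (S : Finset (Fin n)) (c : ℝ) (hc : ∀ i ∈ S, c ≤ hA.eigenvalues i)
    {x : EuclideanSpace ℂ (Fin n)}
    (hx : x ∈ Submodule.span ℂ (⇑hA.eigenvectorBasis '' ↑S)) :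
    c * ‖x‖ ^ 2 ≤ qf A x := by
  rw [qf_eq_sum hA, norm_sq_eq_sum_repr hA, Finset.mul_sum]
  refine Finset.sum_le_sum fun j _ => ?_
  by_cases hj : j ∈ S
  · exact mul_le_mul_of_nonneg_right (hc j hj) (by positivity)
  · rw [repr_eq_zero_of_mem_span hA S hx hj]; simp

lemma qf_le {A : Matrix (Fin n) (Fin n) ℂ} (hA : A.IsHermitian)
    (S : Finset (Fin n)) (c : ℝ) (hc : ∀ i ∈ S, hA.eigenvalues i ≤ c)
    {x : EuclideanSpace ℂ (Fin n)}
    (hx : x ∈ Submodule.span ℂ (⇑hA.eigenvectorBasis '' ↑S)) :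
    qf A x ≤ c * ‖x‖ ^ 2 := by
  rw [qf_eq_sum hA, norm_sq_eq_sum_repr hA, Finset.mul_sum]
  refine Finset.sum_le_sum fun j _ => ?_
  by_cases hj : j ∈ S
  · exact mul_le_mul_of_nonneg_right (hc j hj) (by positivity)
  · rw [repr_eq_zero_of_mem_span hA S hx hj]; simp

lemma qf_abs_le (M : Matrix (Fin n) (Fin n) ℂ) (x : EuclideanSpace ℂ (Fin n)) :
    |qf M x| ≤ (∑ i, ∑ j, ‖M i j‖) * ‖x‖ ^ 2 := by
  have hcoord : ∀ i, ‖x i‖ ≤ ‖x‖ := by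
    intro i
    rw [EuclideanSpace.norm_eq]
    have hs : ‖x i‖ ^ 2 ≤ ∑ j, ‖x j‖ ^ 2 :=
      Finset.single_le_sum (f := fun j => ‖x j‖ ^ 2) (fun j _ => by positivity)
        (Finset.mem_univ i)
    calc ‖x i‖ = Real.sqrt (‖x i‖ ^ 2) := by rw [Real.sqrt_sq (norm_nonneg _)]
      _ ≤ Real.sqrt (∑ j, ‖x j‖ ^ 2) := Real.sqrt_le_sqrt hs
  have h1 : |qf M x| ≤ ‖⟪x, Matrix.toEuclideanLin M x⟫‖ := Complex.abs_re_le_norm _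
  refine h1.trans ?_
  have h2 : ⟪x, Matrix.toEuclideanLin M x⟫ = ∑ i, conj (x i) * ∑ j, M i j * x j := by
    rw [PiLp.inner_apply]
    simp only [RCLike.inner_apply']
    rfl
  rw [h2]
  calc ‖∑ i, conj (x i) * ∑ j, M i j * x j‖
      ≤ ∑ i, ‖conj (x i) * ∑ j, M i j * x j‖ := norm_sum_le _ _
    _ ≤ ∑ i, ∑ j, ‖M i j‖ * (‖x‖ * ‖x‖) := by
        refine Finset.sum_le_sum fun i _ => ?_
        rw [norm_mul, RCLike.norm_conj]
        calc ‖x i‖ * ‖∑ j, M i j * x j‖ ≤ ‖x‖ * ∑ j, ‖M i j * x j‖ := by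
              refine mul_le_mul (hcoord i) (norm_sum_le _ _) (norm_nonneg _) (norm_nonneg _)
          _ ≤ ‖x‖ * ∑ j, ‖M i j‖ * ‖x‖ := by
              refine mul_le_mul_of_nonneg_left ?_ (norm_nonneg _)
              refine Finset.sum_le_sum fun j _ => ?_
              rw [norm_mul]
              exact mul_le_mul_of_nonneg_left (hcoord j) (norm_nonneg _)
          _ = ∑ j, ‖M i j‖ * (‖x‖ * ‖x‖) := by
              rw [Finset.mul_sum]
              exact Finset.sum_congr rfl fun j _ => by ring
    _ = (∑ i, ∑ j, ‖M i j‖) * ‖x‖ ^ 2 := by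
        rw [Finset.sum_mul]
        refine Finset.sum_congr rfl fun i _ => ?_
        rw [Finset.sum_mul]
        exact Finset.sum_congr rfl fun j _ => by ring

noncomputable def sortedEig {A : Matrix (Fin n) (Fin n) ℂ} (hA : A.IsHermitian) : Fin n → ℝ :=
  hA.eigenvalues ∘ Tuple.sort hA.eigenvalues

lemma sortedEig_mono {A : Matrix (Fin n) (Fin n) ℂ} (hA : A.IsHermitian) :
    Monotone (sortedEig hA) :=
  Tuple.monotone_sort _

lemma span_finrank {A : Matrix (Fin n) (Fin n) ℂ} (hA : A.IsHermitian) (S : Finset (Fin n)) :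
    Module.finrank ℂ (Submodule.span ℂ (⇑hA.eigenvectorBasis '' ↑S)) = S.card := by
  have hli : LinearIndependent ℂ (fun i : S => hA.eigenvectorBasis i) :=
    hA.eigenvectorBasis.orthonormal.linearIndependent.comp _ Subtype.val_injective
  have himg : ⇑hA.eigenvectorBasis '' ↑S = Set.range (fun i : S => hA.eigenvectorBasis i) :=
    Set.image_eq_range _ _
  rw [himg, finrank_span_eq_card hli, Fintype.card_coe]

lemma weyl_one {A B : Matrix (Fin n) (Fin n) ℂ} (hA : A.IsHermitian) (hB : B.IsHermitian)
    (c : ℝ) (h : ∀ x : EuclideanSpace ℂ (Fin n), qf A x ≤ qf B x + c * ‖x‖ ^ 2) (k : Fin n) :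
    sortedEig hA k ≤ sortedEig hB k + c := by
  set σA := Tuple.sort hA.eigenvalues with hσA
  set σB := Tuple.sort hB.eigenvalues with hσB
  set SA := (Finset.Ici k).image σA with hSA
  set SB := (Finset.Iic k).image σB with hSB
  set V := Submodule.span ℂ (⇑hA.eigenvectorBasis '' ↑SA) with hV
  set W := Submodule.span ℂ (⇑hB.eigenvectorBasis '' ↑SB) with hW
  have hVr : Module.finrank ℂ V = n - (k : ℕ) := by
    rw [hV, span_finrank, hSA, Finset.card_image_of_injective _ σA.injective, Fin.card_Ici]
  have hWr : Module.finrank ℂ W = (k : ℕ) + 1 := by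
    rw [hW, span_finrank, hSB, Finset.card_image_of_injective _ σB.injective, Fin.card_Iic]
  have hVW : 0 < Module.finrank ℂ ↥(V ⊓ W) := by
    have hsum := Submodule.finrank_sup_add_finrank_inf_eq V W
    have hle : Module.finrank ℂ ↥(V ⊔ W) ≤ n := by
      have h2 := Submodule.finrank_le (V ⊔ W)
      rwa [finrank_euclideanSpace_fin] at h2
    have hk := k.isLt
    omega
  haveI : Nontrivial ↥(V ⊓ W) := Module.finrank_pos_iff.mp hVW
  obtain ⟨z, hzne⟩ := exists_ne (0 : ↥(V ⊓ W))
  set y : EuclideanSpace ℂ (Fin n) := (z : EuclideanSpace ℂ (Fin n)) with hy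
  have hyne : y ≠ 0 := fun hy0 => hzne (Subtype.ext hy0)
  have hyV : y ∈ V := z.2.1
  have hyW : y ∈ W := z.2.2
  have h1 : sortedEig hA k * ‖y‖ ^ 2 ≤ qf A y := by
    refine qf_ge hA SA _ (fun i hi => ?_) hyV
    obtain ⟨j, hj, rfl⟩ := Finset.mem_image.mp hi
    exact sortedEig_mono hA (Finset.mem_Ici.mp hj)
  have h2 : qf B y ≤ sortedEig hB k * ‖y‖ ^ 2 := by
    refine qf_le hB SB _ (fun i hi => ?_) hyW
    obtain ⟨j, hj, rfl⟩ := Finset.mem_image.mp hi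
    exact sortedEig_mono hB (Finset.mem_Iic.mp hj)
  have h3 := h y
  have hy2 : 0 < ‖y‖ ^ 2 := by
    have := norm_pos_iff.mpr hyne
    positivity
  nlinarith [h1, h2, h3, hy2]

lemma weyl_abs {A B : Matrix (Fin n) (Fin n) ℂ} (hA : A.IsHermitian) (hB : B.IsHermitian)
    (k : Fin n) :
    |sortedEig hA k - sortedEig hB k| ≤ ∑ i, ∑ j, ‖(A - B) i j‖ := by
  set c := ∑ i, ∑ j, ‖(A - B) i j‖ with hc
  have hq : ∀ x : EuclideanSpace ℂ (Fin n), qf A x - qf B x = qf (A - B) x := by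
    intro x
    simp [qf, map_sub, inner_sub_right]
  have hc' : (∑ i, ∑ j, ‖(B - A) i j‖) = c := by
    rw [hc]
    refine Finset.sum_congr rfl fun i _ => Finset.sum_congr rfl fun j _ => ?_
    rw [show (B - A) i j = -((A - B) i j) by simp, norm_neg]
  have habs := qf_abs_le (A - B)
  rw [abs_sub_le_iff]
  constructor
  · have := weyl_one hA hB c (fun x => by
      have h1 := (abs_le.mp (habs x)).2
      have h2 := hq x
      linarith) k
    linarith
  · have := weyl_one hB hA c (fun x => by
      have h1 := (abs_le.mp (habs x)).1
      have h2 := hq x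
      linarith) k
    linarith

end Stmt19Aux


noncomputable def pencil {n : ℕ} (A B : Matrix (Fin n) (Fin n) ℂ) : Polynomial ℂ :=
  (A.map (fun a => Polynomial.C a) - (Polynomial.X : Polynomial ℂ) • B.map (fun a => Polynomial.C a)).det

noncomputable def nPos {n : ℕ} {A : Matrix (Fin n) (Fin n) ℂ} (hA : A.IsHermitian) : ℕ :=
  (Finset.univ.filter fun i => 0 < hA.eigenvalues i).card

noncomputable def nZero {n : ℕ} {A : Matrix (Fin n) (Fin n) ℂ} (hA : A.IsHermitian) : ℕ :=
  (Finset.univ.filter fun i => hA.eigenvalues i = 0).card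

noncomputable def nNeg {n : ℕ} {A : Matrix (Fin n) (Fin n) ℂ} (hA : A.IsHermitian) : ℕ :=
  (Finset.univ.filter fun i => hA.eigenvalues i < 0).card

noncomputable def pencilPosCount {n : ℕ} (A B : Matrix (Fin n) (Fin n) ℂ) : ℕ :=
  ((pencil A B).roots.filter fun z => z.im = 0 ∧ 0 < z.re).card

noncomputable def pencilNegCount {n : ℕ} (A B : Matrix (Fin n) (Fin n) ℂ) : ℕ :=
  ((pencil A B).roots.filter fun z => z.im = 0 ∧ z.re < 0).card

noncomputable def pencilRealCount {n : ℕ} (A B : Matrix (Fin n) (Fin n) ℂ) : ℕ :=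
  ((pencil A B).roots.filter fun z => z.im = 0).card

noncomputable def pencilComplexCount {n : ℕ} (A B : Matrix (Fin n) (Fin n) ℂ) : ℕ :=
  ((pencil A B).roots.filter fun z => z.im ≠ 0).card

set_option maxHeartbeats 1000000 in
theorem stmt19 {n : ℕ} (F : ℝ → Matrix (Fin n) (Fin n) ℂ)
    (hcont : Continuous F) (hH : ∀ t, (F t).IsHermitian) :
    ∃ lam : Fin n → ℝ → ℝ, (∀ i, Continuous (lam i)) ∧
      ∀ t, ∃ σ : Equiv.Perm (Fin n), ∀ i, lam i t = (hH t).eigenvalues (σ i) := by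
  classical
  refine ⟨fun i t => Stmt19Aux.sortedEig (hH t) i, ?_, ?_⟩
  · intro i
    rw [Metric.continuous_iff]
    intro t₀ ε hε
    set g : ℝ → ℝ := fun t => ∑ p : Fin n, ∑ q : Fin n, ‖(F t - F t₀) p q‖ with hg
    have hgc : Continuous g := by
      refine continuous_finset_sum _ fun p _ => continuous_finset_sum _ fun q _ => ?_
      have h1 : Continuous fun t => F t p q :=
        (continuous_apply q).comp ((continuous_apply p).comp hcont)
      simpa [Matrix.sub_apply] using (h1.sub continuous_const).norm
    have hg0 : g t₀ = 0 := by simp [hg]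
    obtain ⟨δ, hδ, hδ'⟩ := Metric.continuous_iff.mp hgc t₀ ε hε
    refine ⟨δ, hδ, fun t ht => ?_⟩
    have h2 := hδ' t ht
    rw [Real.dist_eq, hg0, sub_zero] at h2
    have h3 := Stmt19Aux.weyl_abs (hH t) (hH t₀) i
    rw [Real.dist_eq]
    calc |Stmt19Aux.sortedEig (hH t) i - Stmt19Aux.sortedEig (hH t₀) i| ≤ g t := h3
      _ ≤ |g t| := le_abs_self _
      _ < ε := h2
  · intro t
    exact ⟨Tuple.sort (hH t).eigenvalues, fun i => rfl⟩
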